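/- Let λ be a real number with λ ≠ 1/2 and λ·s₁·(1+2ra) ≠ 1. Define the vector v ∈ ℝ^(m+2) by: v_{m+1} = 1; v_{1+(m−j)} = (λ s₁ (1+2ra))^j for j = 1, …, m−1; v₁ = (λ^m s₁^(m−1) (1+2ra)^m (λ s₁ s₂ (1+2ra) − s₁ s₂) + 1)/(λ s₁ (1+2ra) − 1); and v₀ = v₁/(s₂(2λ−1)). Then A_m v = λ v if and only if φ(λ) = 1, where φ(λ) = λ^m · s₁^(m−1) · s₂ · (1+2ra)^m · (λ(1+2ra) − 1) · (s₂(2λ−1)(λ s₁(1+2ra) − 1) − s₁). -/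

import Mathlib

/-- The (m+2)×(m+2) matrix A_m from the paper, rows/columns indexed 0,…,m+1. -/
noncomputable def Amat (s₁ s₂ r a : ℝ) (m : ℕ) : Matrix (Fin (m + 2)) (Fin (m + 2)) ℝ :=
  Matrix.of fun i j =>
    if i.val = 0 then
      (if j.val = 0 then 1 / 2 else if j.val = 1 then 1 / (2 * s₂) else 0)
    else if i.val = 1 then
      (if j.val = 0 then 1 / (1 + 2 * r * a)
       else if j.val = 1 ∨ j.val = m + 1 then 1 / (s₁ + 2 * r * s₁ * a) else 0)
    else if i.val = 2 then
      (if 1 ≤ j.val then 1 / (s₂ + 2 * r * s₂ * a) else 0)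
    else
      (if j.val + 1 = i.val then 1 / (s₁ + 2 * r * s₁ * a) else 0)

/-- The auxiliary function φ from the paper. -/
noncomputable def phi (s₁ s₂ r a : ℝ) (m : ℕ) (l : ℝ) : ℝ :=
  l ^ m * s₁ ^ (m - 1) * s₂ * (1 + 2 * r * a) ^ m * (l * (1 + 2 * r * a) - 1) *
    (s₂ * (2 * l - 1) * (l * s₁ * (1 + 2 * r * a) - 1) - s₁)

theorem stmt_7 (s₁ s₂ r a : ℝ) (hs₁ : 1 < s₁) (hs₂ : 1 < s₂)
    (hsum : 1 / s₁ + 1 / s₂ = 1) (hr : 0 < r) (ha : 0 < a)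
    (m : ℕ) (hm : 1 ≤ m) (l : ℝ) (hl : l ≠ 1 / 2)
    (hl' : l * s₁ * (1 + 2 * r * a) ≠ 1)
    (v : Fin (m + 2) → ℝ)
    (hv1 : v 1 = (l ^ m * s₁ ^ (m - 1) * (1 + 2 * r * a) ^ m *
        (l * s₁ * s₂ * (1 + 2 * r * a) - s₁ * s₂) + 1) /
        (l * s₁ * (1 + 2 * r * a) - 1))
    (hv0 : v 0 = v 1 / (s₂ * (2 * l - 1)))
    (hvj : ∀ k : Fin (m + 2), 2 ≤ k.val →
      v k = (l * s₁ * (1 + 2 * r * a)) ^ (m + 1 - k.val)) :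
    (Amat s₁ s₂ r a m).mulVec v = l • v ↔ phi s₁ s₂ r a m l = 1 := by
  obtain ⟨n, rfl⟩ : ∃ n, m = n + 1 := ⟨m - 1, by omega⟩
  have hP0 : (0:ℝ) < 1 + 2 * r * a := by positivity
  have hPne : (1 + 2 * r * a) ≠ 0 := ne_of_gt hP0
  have hs10 : s₁ ≠ 0 := by positivity
  have hs20 : s₂ ≠ 0 := by positivity
  have h2l : 2 * l - 1 ≠ 0 := by
    intro h; apply hl; linarith
  have hc1 : l * s₁ * (1 + 2 * r * a) - 1 ≠ 0 := sub_ne_zero.mpr hl'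
  have hs2f : s₂ * (s₁ - 1) = s₁ := by
    field_simp at hsum; linarith
  -- evaluations of v
  have hvlast : v ⟨n + 2, by omega⟩ = 1 := by
    have h := hvj ⟨n + 2, by omega⟩ (by simp)
    simpa using h
  have hv2 : v 2 = (l * s₁ * (1 + 2 * r * a)) ^ n := by
    have h := hvj 2 (by simp [Nat.mod_eq_of_lt (show 2 < n+1+2 by omega)])
    simpa [Nat.mod_eq_of_lt (show 2 < n+1+2 by omega)] using h
  have hvtail : ∀ i : Fin (n + 1), v (i.succ.succ) = (l * s₁ * (1 + 2 * r * a)) ^ (n - i.val) := by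
    intro i
    have h := hvj i.succ.succ (by simp [Fin.val_succ])
    rw [h]
    congr 1
    simp only [Fin.val_succ]
    omega
  have hsplit : ∀ F : Fin (n + 1 + 2) → ℝ,
      ∑ j, F j = F 0 + F 1 + ∑ i : Fin (n + 1), F i.succ.succ := by
    intro F
    rw [Fin.sum_univ_succ, Fin.sum_univ_succ]
    have h : Fin.succ (0 : Fin (n + 2)) = 1 := rfl
    rw [h]; ring
  have hmv : ∀ i, (Amat s₁ s₂ r a (n+1)).mulVec v i = ∑ j, Amat s₁ s₂ r a (n+1) i j * v j :=
    fun i => by simp [Matrix.mulVec, dotProduct]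
  -- Row 0
  have row0 : (Amat s₁ s₂ r a (n+1)).mulVec v 0 = l * v 0 := by
    rw [hmv, hsplit]
    have e0 : ∑ i : Fin (n + 1), Amat s₁ s₂ r a (n+1) 0 i.succ.succ * v i.succ.succ = 0 := by
      apply Finset.sum_eq_zero
      intro i _
      simp [Amat, Fin.val_succ]
    rw [e0]
    simp only [Amat, Matrix.of_apply, Fin.val_zero, Fin.val_one]
    norm_num
    rw [hv0]
    field_simp
    ring
  -- Row 1 explicit value
  have row1eq : (Amat s₁ s₂ r a (n+1)).mulVec v 1 =
      1 / (1 + 2 * r * a) * v 0 + 1 / (s₁ + 2 * r * s₁ * a) * v 1 + 1 / (s₁ + 2 * r * s₁ * a) := by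
    rw [hmv, hsplit]
    have etail : ∑ i : Fin (n + 1), Amat s₁ s₂ r a (n+1) 1 i.succ.succ * v i.succ.succ
        = 1 / (s₁ + 2 * r * s₁ * a) := by
      rw [Finset.sum_eq_single (⟨n, by omega⟩ : Fin (n + 1))]
      · have hss : (Fin.succ (Fin.succ (⟨n, by omega⟩ : Fin (n+1))) : Fin (n+1+2)) = ⟨n+2, by omega⟩ := rfl
        rw [hss, hvlast]
        simp [Amat]
      · intro b _ hb
        have hbn : b.val ≠ n := by
          intro h; exact hb (Fin.ext (by simpa using h))
        simp only [Amat, Matrix.of_apply, Fin.val_succ, Fin.val_one, Fin.val_zero]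
        norm_num
        intro h
        omega
      · intro h; exact absurd (Finset.mem_univ _) h
    rw [etail]
    simp only [Amat, Matrix.of_apply, Fin.val_zero, Fin.val_one]
    norm_num
  -- Row 2
  have hs11 : s₁ - 1 ≠ 0 := by intro h; linarith
  have hs2v : s₂ = s₁ / (s₁ - 1) := by
    rw [eq_div_iff hs11]; exact hs2f
  have row2 : (Amat s₁ s₂ r a (n+1)).mulVec v 2 = l * v 2 := by
    rw [hmv, hsplit]
    have e0 : Amat s₁ s₂ r a (n+1) 2 0 * v 0 = 0 := by simp [Amat, (show (2 : Fin (n+1+2)) ≠ 0 from fun h => by simpa [Nat.mod_eq_of_lt (show 2 < n+1+2 by omega)] using congrArg Fin.val h), Nat.mod_eq_of_lt (show 2 < n+1+2 by omega)]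
    have e1 : Amat s₁ s₂ r a (n+1) 2 1 * v 1 = 1 / (s₂ + 2 * r * s₂ * a) * v 1 := by
      simp [Amat, (show (2 : Fin (n+1+2)) ≠ 0 from fun h => by simpa [Nat.mod_eq_of_lt (show 2 < n+1+2 by omega)] using congrArg Fin.val h), Nat.mod_eq_of_lt (show 2 < n+1+2 by omega)]
    have etail : ∑ i : Fin (n + 1), Amat s₁ s₂ r a (n+1) 2 i.succ.succ * v i.succ.succ
        = 1 / (s₂ + 2 * r * s₂ * a) * ∑ i : Fin (n + 1), (l * s₁ * (1 + 2 * r * a)) ^ (n - i.val) := by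
      rw [Finset.mul_sum]
      apply Finset.sum_congr rfl
      intro i _
      rw [hvtail i]
      simp [Amat, Fin.val_succ, (show (2 : Fin (n+1+2)) ≠ 0 from fun h => by simpa [Nat.mod_eq_of_lt (show 2 < n+1+2 by omega)] using congrArg Fin.val h), Nat.mod_eq_of_lt (show 2 < n+1+2 by omega)]
    have hgeom : (∑ i : Fin (n + 1), (l * s₁ * (1 + 2 * r * a)) ^ (n - i.val))
        = ((l * s₁ * (1 + 2 * r * a)) ^ (n + 1) - 1) / (l * s₁ * (1 + 2 * r * a) - 1) := by
      rw [eq_div_iff hc1]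
      rw [Fin.sum_univ_eq_sum_range (fun i => (l * s₁ * (1 + 2 * r * a)) ^ (n - i)) (n+1)]
      rw [show (∑ i ∈ Finset.range (n+1), (l * s₁ * (1 + 2 * r * a)) ^ (n - i))
          = ∑ i ∈ Finset.range (n+1), (l * s₁ * (1 + 2 * r * a)) ^ i from
        Finset.sum_range_reflect (fun j => (l * s₁ * (1 + 2 * r * a)) ^ j) (n+1)]
      exact geom_sum_mul _ (n+1)
    rw [e0, e1, etail, hgeom, hv2, hv1]
    have hm1 : n + 1 - 1 = n := rfl
    rw [hm1, hs2v]
    have h1 : s₁ / (s₁ - 1) + 2 * r * (s₁ / (s₁ - 1)) * a ≠ 0 := by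
      rw [show s₁ / (s₁ - 1) + 2 * r * (s₁ / (s₁ - 1)) * a
          = (s₁ * (1 + 2 * r * a)) / (s₁ - 1) from by ring]
      exact div_ne_zero (mul_ne_zero hs10 hPne) hs11
    simp only [mul_pow]
    set_option maxHeartbeats 1000000 in field_simp [show s₁ * (1 + 2 * r * a) * l - 1 ≠ 0 by contrapose! hc1; linarith]
    set_option maxHeartbeats 1000000 in ring
  -- Rows ≥ 3
  have rowk : ∀ (k : ℕ) (hk : k + 3 < n + 1 + 2),
      (Amat s₁ s₂ r a (n+1)).mulVec v ⟨k+3, hk⟩ = l * v ⟨k+3, hk⟩ := by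
    intro k hk
    rw [hmv]
    rw [Finset.sum_eq_single (⟨k+2, by omega⟩ : Fin (n + 1 + 2))]
    · have h1 : v ⟨k+2, by omega⟩ = (l * s₁ * (1 + 2 * r * a)) ^ (n - k) := by
        rw [hvj ⟨k+2, by omega⟩ (by simp)]
        congr 1
        simp only [Fin.val_mk]
        omega
      have h2 : v ⟨k+3, hk⟩ = (l * s₁ * (1 + 2 * r * a)) ^ (n - k - 1) := by
        rw [hvj ⟨k+3, hk⟩ (by simp only [Fin.val_mk]; omega)]
        congr 1
        simp only [Fin.val_mk]
        omega
      rw [h1, h2]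
      have hA : Amat s₁ s₂ r a (n+1) ⟨k+3, hk⟩ ⟨k+2, by omega⟩ = 1 / (s₁ + 2 * r * s₁ * a) := by
        simp [Amat]
      rw [hA]
      have hnk : n - k = (n - k - 1) + 1 := by omega
      rw [hnk, pow_succ]
      field_simp
      simp
    · intro b _ hb
      have hbv : b.val ≠ k + 2 := by
        intro h; exact hb (Fin.ext (by simpa using h))
      have hA : Amat s₁ s₂ r a (n+1) ⟨k+3, hk⟩ b = 0 := by
        simp only [Amat, Matrix.of_apply]
        rw [if_neg (by omega), if_neg (by omega), if_neg (by omega), if_neg (by omega)]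
      rw [hA, zero_mul]
    · intro h; exact absurd (Finset.mem_univ _) h
  -- Row 1 iff phi = 1
  have key : (1 / (1 + 2 * r * a) * v 0 + 1 / (s₁ + 2 * r * s₁ * a) * v 1
        + 1 / (s₁ + 2 * r * s₁ * a)) - l * v 1
      = (1 - phi s₁ s₂ r a (n+1) l) /
        ((l * s₁ * (1 + 2 * r * a) - 1) * (1 + 2 * r * a) * s₂ * (2 * l - 1)) := by
    rw [hv0, hv1]
    simp only [phi, Nat.add_sub_cancel, mul_pow]
    set_option maxHeartbeats 1000000 in field_simp [show (1 + 2 * r * a) * l * s₁ - 1 ≠ 0 by contrapose! hc1; linarith]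
    set_option maxHeartbeats 1000000 in ring
  have hDne : ((l * s₁ * (1 + 2 * r * a) - 1) * (1 + 2 * r * a) * s₂ * (2 * l - 1)) ≠ 0 := by
    exact mul_ne_zero (mul_ne_zero (mul_ne_zero hc1 hPne) hs20) h2l
  have row1iff : (Amat s₁ s₂ r a (n+1)).mulVec v 1 = l * v 1 ↔ phi s₁ s₂ r a (n+1) l = 1 := by
    rw [row1eq]
    constructor
    · intro h
      have h0 : (1 - phi s₁ s₂ r a (n+1) l) /
          ((l * s₁ * (1 + 2 * r * a) - 1) * (1 + 2 * r * a) * s₂ * (2 * l - 1)) = 0 := by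
        rw [← key]; linarith
      have := (div_eq_zero_iff.mp h0).resolve_right hDne
      linarith
    · intro h
      have h0 : (1 - phi s₁ s₂ r a (n+1) l) = 0 := by rw [h]; ring
      have := key
      rw [h0, zero_div] at this
      linarith
  -- assemble
  constructor
  · intro h
    apply row1iff.mp
    have h1 := congrFun h 1
    rw [Pi.smul_apply, smul_eq_mul] at h1
    exact h1
  · intro hphi
    funext i
    simp only [Pi.smul_apply, smul_eq_mul]
    rcases i with ⟨iv, hiv⟩
    match iv, hiv with
    | 0, hiv => exact row0
    | 1, hiv => exact row1iff.mpr hphi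
    | 2, hiv =>
      have h2 : (⟨2, hiv⟩ : Fin (n+1+2)) = 2 := by ext; simp [Nat.mod_eq_of_lt (show 2 < n+1+2 by omega)]
      rw [h2]; exact row2
    | (k+3), hiv => exact rowk k hiv
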